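/- Let X = X⁺ ⊕ X̃ be a Hilbert space decomposition, J : X → ℝ with J(u) = ½‖u⁺‖² − I(u) where I(u) = ½‖ũ‖² + Ψ(u), Ψ : X → ℝ of class C¹. Assume the pointwise inequality of Lemma 3.2 holds for Ψ, namely Ψ'(u)((t²−1)/2 u + tv) + Ψ(u) − Ψ(tu + v) ≤ 0 for all u ∈ X, v ∈ X̃, t ≥ 0. Then for all u ∈ X, v ∈ X̃, t ≥ 0: J(u) ≥ J(tu + v) − J'(u)((t²−1)/2 · u + t v). -/

import Mathlib

set_option maxHeartbeats 800000


open scoped RealInnerProductSpace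

/-- If `J(u) = ½‖u⁺‖² − ½‖ũ‖² − Ψ(u)` and `Ψ` satisfies the pointwise
inequality of Lemma 3.2, then `J(u) ≥ J(tu+v) − J'(u)((t²−1)/2·u + tv)` for all
`u ∈ X`, `v ∈ X̃`, `t ≥ 0`. -/
theorem stmt13 {X : Type*} [NormedAddCommGroup X] [InnerProductSpace ℝ X] [CompleteSpace X]
    (Pp Pt : X →L[ℝ] X)
    (hsum : ∀ u, Pp u + Pt u = u)
    (horth : ∀ u v, ⟪Pp u, Pt v⟫ = 0)
    (hPpt : ∀ u, Pp (Pt u) = 0) (hPtp : ∀ u, Pt (Pp u) = 0)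
    (Ψ : X → ℝ) (Ψ' : X → X →L[ℝ] ℝ) (hΨ : ∀ u, HasFDerivAt Ψ (Ψ' u) u)
    (J : X → ℝ) (hJ : ∀ u, J u = (1/2) * ‖Pp u‖ ^ 2 - (1/2) * ‖Pt u‖ ^ 2 - Ψ u)
    (J' : X → X →L[ℝ] ℝ) (hJ' : ∀ u, HasFDerivAt J (J' u) u)
    (hkey : ∀ (u v : X) (t : ℝ), Pt v = v → 0 ≤ t →
      Ψ' u (((t ^ 2 - 1) / 2) • u + t • v) + Ψ u - Ψ (t • u + v) ≤ 0) :
    ∀ (u v : X) (t : ℝ), Pt v = v → 0 ≤ t →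
      J (t • u + v) - J' u (((t ^ 2 - 1) / 2) • u + t • v) ≤ J u := by
  intro u v t hv ht
  -- explicit formula for J' u
  have hJeq : J = fun x => (1/2) * ⟪Pp x, Pp x⟫ - (1/2) * ⟪Pt x, Pt x⟫ - Ψ x := by
    funext x
    rw [hJ x, real_inner_self_eq_norm_sq, real_inner_self_eq_norm_sq]
  have hDp : HasFDerivAt (fun x => ⟪Pp x, Pp x⟫)
      ((fderivInnerCLM ℝ (Pp u, Pp u)).comp (Pp.prod Pp)) u :=
    (Pp.hasFDerivAt).inner ℝ (Pp.hasFDerivAt)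
  have hDt : HasFDerivAt (fun x => ⟪Pt x, Pt x⟫)
      ((fderivInnerCLM ℝ (Pt u, Pt u)).comp (Pt.prod Pt)) u :=
    (Pt.hasFDerivAt).inner ℝ (Pt.hasFDerivAt)
  have hD : HasFDerivAt J
      ((1/2 : ℝ) • ((fderivInnerCLM ℝ (Pp u, Pp u)).comp (Pp.prod Pp))
        - (1/2 : ℝ) • ((fderivInnerCLM ℝ (Pt u, Pt u)).comp (Pt.prod Pt)) - Ψ' u) u := by
    rw [hJeq]
    exact ((hDp.const_smul (1/2 : ℝ)).sub (hDt.const_smul (1/2 : ℝ))).sub (hΨ u)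
  have hJu : J' u = (1/2 : ℝ) • ((fderivInnerCLM ℝ (Pp u, Pp u)).comp (Pp.prod Pp))
        - (1/2 : ℝ) • ((fderivInnerCLM ℝ (Pt u, Pt u)).comp (Pt.prod Pt)) - Ψ' u :=
    (hJ' u).unique hD
  set w : X := ((t ^ 2 - 1) / 2) • u + t • v with hw
  have hJ'w : J' u w = ⟪Pp u, Pp w⟫ - ⟪Pt u, Pt w⟫ - Ψ' u w := by
    rw [hJu]
    simp [fderivInnerCLM_apply, real_inner_comm]
    ring
  have hPpv : Pp v = 0 := by rw [← hv]; exact hPpt v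
  have hkey' := hkey u v t hv ht
  rw [hJ (t • u + v), hJ u, hJ'w]
  have e1 : Pp (t • u + v) = t • Pp u := by simp [hPpv]
  have e2 : Pt (t • u + v) = t • Pt u + v := by simp [hv]
  have e3 : Pp w = ((t ^ 2 - 1) / 2) • Pp u := by simp [hw, hPpv]
  have e4 : Pt w = ((t ^ 2 - 1) / 2) • Pt u + t • v := by simp [hw, hv]
  rw [e1, e2, e3, e4]
  have hip : ⟪Pt u, ((t ^ 2 - 1) / 2) • Pt u + t • v⟫
      = ((t ^ 2 - 1) / 2) * ⟪Pt u, Pt u⟫ + t * ⟪Pt u, v⟫ := by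
    simp [inner_add_right, real_inner_smul_right]
  have hipp : ⟪Pp u, ((t ^ 2 - 1) / 2) • Pp u + 0⟫ = ((t ^ 2 - 1) / 2) * ⟪Pp u, Pp u⟫ := by
    simp [real_inner_smul_right]
  have hn1 : ‖t • Pp u‖ ^ 2 = t ^ 2 * ‖Pp u‖ ^ 2 := by
    rw [norm_smul]; simp [mul_pow]
  have hn2 : ‖t • Pt u + v‖ ^ 2 = t ^ 2 * ‖Pt u‖ ^ 2 + 2 * t * ⟪Pt u, v⟫ + ‖v‖ ^ 2 := by
    rw [norm_add_sq_real, norm_smul, real_inner_smul_left, mul_pow, Real.norm_eq_abs, sq_abs]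
    ring
  rw [hn1, hn2]
  have hip2 : ⟪Pp u, ((t ^ 2 - 1) / 2) • Pp u⟫ = ((t ^ 2 - 1) / 2) * ‖Pp u‖^2 := by
    rw [real_inner_smul_right, real_inner_self_eq_norm_sq]
  rw [hip2, hip, real_inner_self_eq_norm_sq]
  nlinarith [sq_nonneg ‖v‖, sq_nonneg (‖v‖ : ℝ)]
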